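/- Merging repeated-guess POVM elements does not increase cost: let \{E_g\}_{g \in \mathcal{X}^K} be a POVM, c a non-decreasing cost vector, R_g = \sum_x p(x) c_{N(g,x)} \rho_B^x. Suppose h \in \mathcal{X}^K has repeated elements and h' \in \mathcal{X}^K agrees with h except that repetitions are replaced so that h' has distinct entries and every entry of h appears in h' no later than in h. Define \tilde{E}_{h'} = E_{h} + E_{h'}, \tilde{E}_h = 0, and \tilde{E}_g = E_g otherwise. Then \{\tilde{E}_g\} is a POVM and \sum_g \mathrm{tr}[R_g \tilde{E}_g] \leq \sum_g \mathrm{tr}[R_g E_g]. -/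

import Mathlib

open Matrix ComplexOrder

variable {X : Type*} [Fintype X] [DecidableEq X] {K d : ℕ}

/-- The cost `c_{N(g,x)}` where `N(g,x) = min{j : g j = x}` is the first position of
`x` in the (possibly repeating) guessing sequence `g`, with cost `cinf` if `x` never
appears. -/
noncomputable def seqCost (c : Fin K → ℝ) (cinf : ℝ) (g : Fin K → X) (x : X) : ℝ :=
  if h : (Finset.univ.filter fun j => g j = x).Nonempty
  then c ((Finset.univ.filter fun j => g j = x).min' h) else cinf

/-- The cost operator `R_g = ∑_x p(x) c_{N(g,x)} ρ_B^x`. -/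
noncomputable def seqCostOp (c : Fin K → ℝ) (cinf : ℝ) (p : X → ℝ)
    (ρ : X → Matrix (Fin d) (Fin d) ℂ) (g : Fin K → X) : Matrix (Fin d) (Fin d) ℂ :=
  ∑ x, ((p x * seqCost c cinf g x : ℝ) : ℂ) • ρ x

/-- Real nonnegative scalar multiple of a PSD matrix is PSD. -/
lemma psd_real_smul {n : ℕ} {M : Matrix (Fin n) (Fin n) ℂ} (hM : M.PosSemidef)
    {r : ℝ} (hr : 0 ≤ r) : ((r : ℂ) • M).PosSemidef := by
  refine Matrix.PosSemidef.of_dotProduct_mulVec_nonneg ?_ ?_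
  · rw [Matrix.IsHermitian, conjTranspose_smul, hM.1.eq]
    congr 1
    simp [Complex.ext_iff]
  · intro x
    rw [smul_mulVec, dotProduct_smul]
    have h2 : (0 : ℂ) ≤ (r : ℂ) := by
      rw [Complex.le_def]; simp [hr]
    exact mul_nonneg h2 (hM.dotProduct_mulVec_nonneg x)

/-- Trace of a PSD matrix is nonnegative (in `ComplexOrder`). -/
lemma psd_trace_nonneg {n : ℕ} {M : Matrix (Fin n) (Fin n) ℂ} (hM : M.PosSemidef) :
    0 ≤ M.trace := by
  rw [Matrix.trace]
  refine Finset.sum_nonneg fun i _ => ?_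
  have h2 := hM.dotProduct_mulVec_nonneg (Pi.single i 1)
  simpa [dotProduct, Pi.single_apply, apply_ite] using h2

/-- Trace of a product of PSD matrices is nonnegative. -/
lemma psd_mul_trace_nonneg {n : ℕ} {A B : Matrix (Fin n) (Fin n) ℂ}
    (hA : A.PosSemidef) (hB : B.PosSemidef) : 0 ≤ (A * B).trace := by
  obtain ⟨S, hSA⟩ : ∃ S : Matrix (Fin n) (Fin n) ℂ, A = star S * S := by
    open MatrixOrder in
    exact CStarAlgebra.nonneg_iff_eq_star_mul_self.mp (Matrix.nonneg_iff_posSemidef.mpr hA)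
  rw [hSA, star_eq_conjTranspose]
  have h2 : (Sᴴ * S * B).trace = ((Sᴴ)ᴴ * B * Sᴴ).trace := by
    rw [conjTranspose_conjTranspose, mul_assoc, trace_mul_comm]
  rw [h2]
  exact psd_trace_nonneg (hB.conjTranspose_mul_mul_same _)

lemma seqCost_le_of_early (c : Fin K → ℝ) (cinf : ℝ)
    (hc : Monotone c) (hcinf : ∀ k, c k ≤ cinf) (h h' : Fin K → X)
    (hearly : ∀ (x : X) (j : Fin K), h j = x → ∃ j' ≤ j, h' j' = x) (x : X) :
    seqCost c cinf h' x ≤ seqCost c cinf h x := by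
  unfold seqCost
  by_cases hne : (Finset.univ.filter fun j => h j = x).Nonempty
  · rw [dif_pos hne]
    set j := (Finset.univ.filter fun j => h j = x).min' hne with hj
    have hjx : h j = x := by
      have := (Finset.univ.filter fun j => h j = x).min'_mem hne
      simpa using this
    obtain ⟨j', hj'le, hj'x⟩ := hearly x j hjx
    have hne' : (Finset.univ.filter fun j => h' j = x).Nonempty :=
      ⟨j', by simpa using hj'x⟩
    rw [dif_pos hne']
    refine hc ?_
    calc (Finset.univ.filter fun j => h' j = x).min' hne' ≤ j' :=
          Finset.min'_le _ _ (by simpa using hj'x)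
      _ ≤ j := hj'le
  · rw [dif_neg hne]
    by_cases hne' : (Finset.univ.filter fun j => h' j = x).Nonempty
    · rw [dif_pos hne']; exact hcinf _
    · rw [dif_neg hne']

/-- The difference of cost operators `R_h - R_{h'}` is PSD when `h'` is everywhere
at least as early as `h`. -/
lemma seqCostOp_sub_psd (c : Fin K → ℝ) (cinf : ℝ)
    (hc : Monotone c) (hcinf : ∀ k, c k ≤ cinf)
    (p : X → ℝ) (hp0 : ∀ x, 0 ≤ p x)
    (ρ : X → Matrix (Fin d) (Fin d) ℂ) (hρ : ∀ x, (ρ x).PosSemidef)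
    (h h' : Fin K → X)
    (hearly : ∀ (x : X) (j : Fin K), h j = x → ∃ j' ≤ j, h' j' = x) :
    (seqCostOp c cinf p ρ h - seqCostOp c cinf p ρ h').PosSemidef := by
  have key : seqCostOp c cinf p ρ h - seqCostOp c cinf p ρ h'
      = ∑ x, ((p x * (seqCost c cinf h x - seqCost c cinf h' x) : ℝ) : ℂ) • ρ x := by
    rw [seqCostOp, seqCostOp, ← Finset.sum_sub_distrib]
    refine Finset.sum_congr rfl fun x _ => ?_
    rw [← sub_smul]
    congr 1
    push_cast
    ring
  rw [key]
  refine Finset.sum_induction _ _ (fun a b ha hb => ha.add hb) Matrix.PosSemidef.zero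
    fun x _ => ?_
  exact psd_real_smul (hρ x)
    (mul_nonneg (hp0 x) (sub_nonneg.2 (seqCost_le_of_early c cinf hc hcinf h h' hearly x)))

/-- Merging a repeated-guess POVM element into its repetition-free improvement does
not increase the expected cost: the modified family `Ẽ` (with `Ẽ_h = 0`,
`Ẽ_{h'} = E_h + E_{h'}`) is again a POVM and has expected cost no larger than `E`. -/
theorem merge_repeated_guesses_le (c : Fin K → ℝ) (cinf : ℝ)
    (hc : Monotone c) (hcinf : ∀ k, c k ≤ cinf)
    (p : X → ℝ) (hp0 : ∀ x, 0 ≤ p x) (hp1 : ∑ x, p x = 1)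
    (ρ : X → Matrix (Fin d) (Fin d) ℂ)
    (hρ : ∀ x, (ρ x).PosSemidef) (hρtr : ∀ x, (ρ x).trace = 1)
    (E : (Fin K → X) → Matrix (Fin d) (Fin d) ℂ)
    (hEpos : ∀ g, (E g).PosSemidef) (hEsum : ∑ g, E g = 1)
    (h h' : Fin K → X)
    (hrep : ¬ Function.Injective h) (hinj : Function.Injective h')
    (hearly : ∀ (x : X) (j : Fin K), h j = x → ∃ j' ≤ j, h' j' = x) :
    (∀ g, (if g = h then 0 else if g = h' then E h + E h' else E g).PosSemidef) ∧
      (∑ g : Fin K → X, (if g = h then 0 else if g = h' then E h + E h' else E g)) = 1 ∧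
      (∑ g : Fin K → X, (seqCostOp c cinf p ρ g *
          (if g = h then 0 else if g = h' then E h + E h' else E g)).trace).re ≤
        (∑ g : Fin K → X, (seqCostOp c cinf p ρ g * E g).trace).re := by
  have hne : h ≠ h' := fun e => hrep (e ▸ hinj)
  set Et : (Fin K → X) → Matrix (Fin d) (Fin d) ℂ :=
    fun g => if g = h then 0 else if g = h' then E h + E h' else E g with hEt
  have hEth : Et h = 0 := by simp [hEt]
  have hEth' : Et h' = E h + E h' := by simp [hEt, hne.symm]
  have hEtg : ∀ g, g ≠ h → g ≠ h' → Et g = E g := by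
    intro g h1 h2; simp [hEt, h1, h2]
  refine ⟨?_, ?_, ?_⟩
  · intro g
    by_cases h1 : g = h
    · simpa [h1] using Matrix.PosSemidef.zero
    by_cases h2 : g = h'
    · simpa [h1, h2, hne.symm] using (hEpos h).add (hEpos h')
    · simpa [h1, h2] using hEpos g
  · have hdiff : ∑ g : Fin K → X, (Et g - E g) = 0 := by
      rw [Finset.sum_eq_add h h' hne
        (fun g _ hg => by rw [hEtg g hg.1 hg.2, sub_self])
        (fun hg => absurd (Finset.mem_univ h) hg)
        (fun hg => absurd (Finset.mem_univ h') hg)]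
      rw [hEth, hEth']
      abel
    have := Finset.sum_sub_distrib (s := (Finset.univ : Finset (Fin K → X)))
      (f := Et) (g := E)
    rw [hdiff] at this
    have h0 : ∑ g : Fin K → X, Et g = ∑ g : Fin K → X, E g := sub_eq_zero.mp this.symm
    rw [h0, hEsum]
  · set R := seqCostOp c cinf p ρ with hR
    have tnn : 0 ≤ ((R h - R h') * E h).trace :=
      psd_mul_trace_nonneg (seqCostOp_sub_psd c cinf hc hcinf p hp0 ρ hρ h h' hearly)
        (hEpos h)
    have key : ∑ g : Fin K → X, ((R g * Et g).trace - (R g * E g).trace)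
        = -(((R h - R h') * E h).trace) := by
      rw [Finset.sum_eq_add h h' hne
        (fun g _ hg => by rw [hEtg g hg.1 hg.2, sub_self])
        (fun hg => absurd (Finset.mem_univ h) hg)
        (fun hg => absurd (Finset.mem_univ h') hg)]
      rw [hEth, hEth', Matrix.mul_zero, Matrix.trace_zero, Matrix.mul_add,
        Matrix.trace_add, Matrix.sub_mul, Matrix.trace_sub]
      ring
    rw [Finset.sum_sub_distrib] at key
    have hsum : ∑ g : Fin K → X, (R g * Et g).trace
        = ∑ g : Fin K → X, (R g * E g).trace - ((R h - R h') * E h).trace := by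
      linear_combination key
    rw [hsum, Complex.sub_re]
    have hre : 0 ≤ (((R h - R h') * E h).trace).re := by
      rw [Complex.le_def] at tnn
      simpa using tnn.1
    linarith
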